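/- If D > d, then the polynomial P1(X) = (X+c2)·(X+c3)·(X+c4)·(X+C2)·(X+C3)·(X+C4)·Q1(X)·Q2(X) has a strictly positive real root, where Q1(X) = (B·d+1)·X^2 + (B·(C0+A1+C1)·d − A0 + C0 + A1 + C1)·X + C1·(B·d·C0 − A0 + C0) and Q2(X) = (d·b1+1)^2·X^2 + (b1^2·(a1+c1+c0)·d^2 + 2·b1·(a1+c1+c0)·d + a1 + c1 − a0 + c0)·X + c1·(d^2·b1^2·c0 + 2·d·b1·c0 − a0 + c0); in particular the steady state Ẽ1 of system (3) is linearly unstable when D > d. -/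
import Mathlib

lemma quad_pos_root (a b c : ℝ) (ha : 0 < a) (hc : c < 0) :
    ∃ x : ℝ, 0 < x ∧ a * x ^ 2 + b * x + c = 0 := by
  have hdisc : 0 ≤ b ^ 2 - 4 * a * c := by nlinarith
  set s := Real.sqrt (b ^ 2 - 4 * a * c) with hs
  have hs2 : s ^ 2 = b ^ 2 - 4 * a * c := Real.sq_sqrt hdisc
  have hsb : b < s := by
    have hs0 : 0 ≤ s := Real.sqrt_nonneg _
    nlinarith [abs_nonneg b, sq_abs b, le_abs_self b]
  refine ⟨(s - b) / (2 * a), div_pos (by linarith) (by linarith), ?_⟩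
  field_simp
  nlinarith [hs2]

/-- If `D > d`, the characteristic polynomial `P1` of the Jacobian of system (3)
at `Ẽ1` has a strictly positive real root; in particular `Ẽ1` is linearly
unstable when `D > d`. -/
theorem stmt7 (a0 a1 a2 a3 a4 c0 c1 c2 c3 c4 A0 A1 A2 A3 A4 C0 C1 C2 C3 C4 b1 b2 B d D : ℝ)
    (ha0 : 0 < a0) (ha1 : 0 < a1) (ha2 : 0 < a2) (ha3 : 0 < a3) (ha4 : 0 < a4)
    (hc0 : 0 < c0) (hc1 : 0 < c1) (hc2 : 0 < c2) (hc3 : 0 < c3) (hc4 : 0 < c4)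
    (hA0 : 0 < A0) (hA1 : 0 < A1) (hA2 : 0 < A2) (hA3 : 0 < A3) (hA4 : 0 < A4)
    (hC0 : 0 < C0) (hC1 : 0 < C1) (hC2 : 0 < C2) (hC3 : 0 < C3) (hC4 : 0 < C4)
    (hb1 : 0 < b1) (hb2 : 0 < b2) (hB : 0 < B)
    (hac : c0 < a0) (hAC : C0 < A0)
    (hd : d = (a0 - c0) / (b1 * c0)) (hD : D = (A0 - C0) / (B * C0))
    (hDd : d < D) :
    ∃ x : ℝ, 0 < x ∧
      (x + c2) * (x + c3) * (x + c4) * (x + C2) * (x + C3) * (x + C4) *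
        ((B * d + 1) * x ^ 2 + (B * (C0 + A1 + C1) * d - A0 + C0 + A1 + C1) * x + C1 * (B * d * C0 - A0 + C0)) *
        ((d * b1 + 1) ^ 2 * x ^ 2 + (b1 ^ 2 * (a1 + c1 + c0) * d ^ 2 + 2 * b1 * (a1 + c1 + c0) * d + a1 + c1 - a0 + c0) * x + c1 * (d ^ 2 * b1 ^ 2 * c0 + 2 * d * b1 * c0 - a0 + c0)) = 0 := by
  have hd0 : 0 < d := by
    rw [hd]; exact div_pos (by linarith) (by positivity)
  have hDval : B * C0 * D = A0 - C0 := by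
    rw [hD]; field_simp
  have hcneg : C1 * (B * d * C0 - A0 + C0) < 0 := by
    have : B * d * C0 < A0 - C0 := by nlinarith
    nlinarith
  obtain ⟨x, hx, hroot⟩ := quad_pos_root (B * d + 1)
    (B * (C0 + A1 + C1) * d - A0 + C0 + A1 + C1) (C1 * (B * d * C0 - A0 + C0))
    (by positivity) hcneg
  exact ⟨x, hx, by rw [hroot]; ring⟩
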